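/- Let Ω ⊂ ℝ^N (N ≥ 2) be an open bounded set with C^{1,γ} boundary (0 < γ < 1) and let 1 < p < ∞. Then T_p(Ω) · λ_p^D(Ω)^{1/(p−1)} ≤ |Ω| (Pólya-type inequality). -/

import Mathlib

open MeasureTheory Metric Set Filter
open scoped Topology ENNReal NNReal

noncomputable section

/-- The `(N-1)`-dimensional Hausdorff measure on `ℝ^N`, used as boundary measure. -/
def bdry (N : ℕ) : Measure (EuclideanSpace ℝ (Fin N)) :=
  MeasureTheory.Measure.hausdorffMeasure ((N : ℝ) - 1)

/-- The perimeter `P(Ω) = H^{N-1}(∂Ω)`. -/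
def perim (N : ℕ) (Ω : Set (EuclideanSpace ℝ (Fin N))) : ℝ :=
  (bdry N (frontier Ω)).toReal

/-- The Lebesgue measure `|Ω|` as a real number. -/
def vol (N : ℕ) (Ω : Set (EuclideanSpace ℝ (Fin N))) : ℝ :=
  (MeasureTheory.volume Ω).toReal

/-- `w` is of class `C^1` on the closure of `Ω`. -/
def C1Cl (N : ℕ) (Ω : Set (EuclideanSpace ℝ (Fin N)))
    (w : EuclideanSpace ℝ (Fin N) → ℝ) : Prop :=
  ContDiffOn ℝ 1 w (closure Ω)

/-- `φ ∈ C_c^∞(Ω)`: smooth, compactly supported, with support contained in `Ω`. -/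
def CcInf (N : ℕ) (Ω : Set (EuclideanSpace ℝ (Fin N)))
    (φ : EuclideanSpace ℝ (Fin N) → ℝ) : Prop :=
  ContDiff ℝ (⊤ : ℕ∞) φ ∧ HasCompactSupport φ ∧ tsupport φ ⊆ Ω

/-- The first Robin eigenvalue `λ_p(β,Ω)` of the `p`-Laplacian, as the infimum of the
Rayleigh quotient over functions of class `C^1` on the closure of `Ω`, not identically zero. -/
def robinEig (N : ℕ) (p β : ℝ) (Ω : Set (EuclideanSpace ℝ (Fin N))) : ℝ :=
  sInf {r : ℝ | ∃ w : EuclideanSpace ℝ (Fin N) → ℝ, C1Cl N Ω w ∧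
    (0 < ∫ x in Ω, |w x| ^ p) ∧
    r = ((∫ x in Ω, ‖gradient w x‖ ^ p) +
          β * ∫ x in frontier Ω, |w x| ^ p ∂(bdry N)) / ∫ x in Ω, |w x| ^ p}

/-- The first Dirichlet eigenvalue `λ_p^D(Ω)` of the `p`-Laplacian. -/
def dirichletEig (N : ℕ) (p : ℝ) (Ω : Set (EuclideanSpace ℝ (Fin N))) : ℝ :=
  sInf {r : ℝ | ∃ φ : EuclideanSpace ℝ (Fin N) → ℝ, CcInf N Ω φ ∧
    (0 < ∫ x in Ω, |φ x| ^ p) ∧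
    r = (∫ x in Ω, ‖gradient φ x‖ ^ p) / ∫ x in Ω, |φ x| ^ p}

/-- The `p`-torsional rigidity `T_p(Ω)`. -/
def pTorsion (N : ℕ) (p : ℝ) (Ω : Set (EuclideanSpace ℝ (Fin N))) : ℝ :=
  (sSup {r : ℝ | ∃ φ : EuclideanSpace ℝ (Fin N) → ℝ, CcInf N Ω φ ∧ (∃ x, φ x ≠ 0) ∧
    r = (∫ x in Ω, |φ x|) ^ p / ∫ x in Ω, ‖gradient φ x‖ ^ p}) ^ ((1 : ℝ) / (p - 1))

/-- `Ω` has Lipschitz boundary: near every boundary point, up to a rotation,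
`Ω` is the open region above the graph of a Lipschitz function. -/
def HasLipschitzBoundary (N : ℕ) (Ω : Set (EuclideanSpace ℝ (Fin N))) : Prop :=
  ∀ x ∈ frontier Ω, ∃ r : ℝ, 0 < r ∧
    ∃ (e : EuclideanSpace ℝ (Fin N) ≃ₗᵢ[ℝ] EuclideanSpace ℝ (Fin (N - 1 + 1)))
      (g : EuclideanSpace ℝ (Fin (N - 1)) → ℝ) (L : NNReal), LipschitzWith L g ∧
      Ω ∩ ball x r =
        {y ∈ ball x r | g (WithLp.toLp 2 (fun i : Fin (N - 1) => e y i.castSucc)) < e y (Fin.last (N - 1))}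

/-- `Ω` has `C^{1,γ}` boundary: near every boundary point, up to a rotation,
`Ω` is the open region above the graph of a `C^1` function whose differential is
`γ`-Hölder continuous. -/
def HasC1GammaBoundary (N : ℕ) (γ : ℝ) (Ω : Set (EuclideanSpace ℝ (Fin N))) : Prop :=
  ∀ x ∈ frontier Ω, ∃ r : ℝ, 0 < r ∧
    ∃ (e : EuclideanSpace ℝ (Fin N) ≃ₗᵢ[ℝ] EuclideanSpace ℝ (Fin (N - 1 + 1)))
      (g : EuclideanSpace ℝ (Fin (N - 1)) → ℝ), ContDiff ℝ 1 g ∧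
      (∃ C : ℝ, ∀ a b, ‖fderiv ℝ g a - fderiv ℝ g b‖ ≤ C * ‖a - b‖ ^ γ) ∧
      Ω ∩ ball x r =
        {y ∈ ball x r | g (WithLp.toLp 2 (fun i : Fin (N - 1) => e y i.castSucc)) < e y (Fin.last (N - 1))}

/-- `f ∈ L^∞(Ω)`: `f` is measurable and bounded on `Ω`. -/
def MemLinfty (N : ℕ) (Ω : Set (EuclideanSpace ℝ (Fin N)))
    (f : EuclideanSpace ℝ (Fin N) → ℝ) : Prop :=
  Measurable f ∧ ∃ M : ℝ, ∀ x ∈ Ω, |f x| ≤ M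

/-- `f` is not identically zero (as an element of a Lebesgue space on `Ω`). -/
def NotAEZero (N : ℕ) (Ω : Set (EuclideanSpace ℝ (Fin N)))
    (f : EuclideanSpace ℝ (Fin N) → ℝ) : Prop :=
  ¬ (∀ᵐ x ∂(MeasureTheory.volume.restrict Ω), f x = 0)

/-- `u` is a weak solution of the Robin problem `-Δ_p u = f` in `Ω`,
`|∇u|^{p-2} ∂u/∂ν + β |u|^{p-2} u = 0` on `∂Ω`. -/
def IsRobinSolution (N : ℕ) (p β : ℝ) (Ω : Set (EuclideanSpace ℝ (Fin N)))
    (f u : EuclideanSpace ℝ (Fin N) → ℝ) : Prop :=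
  C1Cl N Ω u ∧
  ∀ φ : EuclideanSpace ℝ (Fin N) → ℝ, C1Cl N Ω φ →
    (∫ x in Ω, ‖gradient u x‖ ^ (p - 2) * (inner ℝ (gradient u x) (gradient φ x) : ℝ)) +
      β * ∫ x in frontier Ω, |u x| ^ (p - 2) * u x * φ x ∂(bdry N) =
    ∫ x in Ω, f x * φ x

/-- `u` is a weak solution of the Dirichlet problem `-Δ_p u = f` in `Ω`, `u = 0` on `∂Ω`. -/
def IsDirichletSolution (N : ℕ) (p : ℝ) (Ω : Set (EuclideanSpace ℝ (Fin N)))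
    (f u : EuclideanSpace ℝ (Fin N) → ℝ) : Prop :=
  ContDiffOn ℝ 1 u Ω ∧ ContinuousOn u (closure Ω) ∧ (∀ x ∈ frontier Ω, u x = 0) ∧
  IntegrableOn (fun x => ‖gradient u x‖ ^ p) Ω ∧
  ∀ φ : EuclideanSpace ℝ (Fin N) → ℝ, CcInf N Ω φ →
    (∫ x in Ω, ‖gradient u x‖ ^ (p - 2) * (inner ℝ (gradient u x) (gradient φ x) : ℝ)) =
    ∫ x in Ω, f x * φ x

/-- `v` is a weak solution of `-Δ_p v = f` in `Ω`, `|∇v|^{p-2} ∂v/∂ν = -K^{p-1}` on `∂Ω`,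
with vanishing mean on `∂Ω`, where `K = ((1/P(Ω)) ∫_Ω f)^{1/(p-1)}`. -/
def IsNeumannKSolution (N : ℕ) (p : ℝ) (Ω : Set (EuclideanSpace ℝ (Fin N)))
    (f v : EuclideanSpace ℝ (Fin N) → ℝ) : Prop :=
  C1Cl N Ω v ∧ (∫ x in frontier Ω, v x ∂(bdry N)) = 0 ∧
  ∀ φ : EuclideanSpace ℝ (Fin N) → ℝ, C1Cl N Ω φ →
    (∫ x in Ω, ‖gradient v x‖ ^ (p - 2) * (inner ℝ (gradient v x) (gradient φ x) : ℝ)) +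
      ((((1 / perim N Ω) * ∫ x in Ω, f x) ^ ((1 : ℝ) / (p - 1))) ^ (p - 1)) *
        ∫ x in frontier Ω, φ x ∂(bdry N) =
    ∫ x in Ω, f x * φ x

/-- The quantity `ν_p`. -/
def nuP (N : ℕ) (p : ℝ) (Ω : Set (EuclideanSpace ℝ (Fin N))) : ℝ :=
  sInf {r : ℝ | ∃ f v : EuclideanSpace ℝ (Fin N) → ℝ,
    MemLinfty N Ω f ∧ (∀ x ∈ Ω, 0 ≤ f x) ∧ NotAEZero N Ω f ∧
    IsNeumannKSolution N p Ω f v ∧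
    r = (∫ x in Ω, f x ^ (p / (p - 1))) / ∫ x in Ω, ‖gradient v x‖ ^ p}
/-- A continuous nonnegative function, positive somewhere on an open bounded set,
has positive integral over that set. -/
lemma aux_integ_pos {N : ℕ} {Ω : Set (EuclideanSpace ℝ (Fin N))} (hΩ : IsOpen Ω)
    (hb : Bornology.IsBounded Ω) {f : EuclideanSpace ℝ (Fin N) → ℝ}
    (hf : Continuous f) (hnn : ∀ x, 0 ≤ f x) {x0 : EuclideanSpace ℝ (Fin N)}
    (hx0 : x0 ∈ Ω) (hfx0 : f x0 ≠ 0) :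
    0 < ∫ x in Ω, f x := by
  have hint : IntegrableOn f Ω :=
    ((hf.continuousOn).integrableOn_compact hb.isCompact_closure).mono_set subset_closure
  rw [setIntegral_pos_iff_support_of_nonneg_ae
    (Filter.Eventually.of_forall fun x => hnn x) hint]
  refine ((hf.isOpen_support.inter hΩ).measure_pos volume ⟨x0, hfx0, hx0⟩)

/-- Continuity of the gradient of a smooth function. -/
lemma aux_cont_gradient {N : ℕ} {φ : EuclideanSpace ℝ (Fin N) → ℝ}
    (h : ContDiff ℝ (⊤ : ℕ∞) φ) : Continuous (gradient φ) :=
  (InnerProductSpace.toDual ℝ _).symm.continuous.comp (h.continuous_fderiv (by simp))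

/-- Pólya-type inequality: `T_p(Ω) λ_p^D(Ω)^{1/(p-1)} ≤ |Ω|`. -/
theorem stmt_15 (N : ℕ) (hN : 2 ≤ N) (Ω : Set (EuclideanSpace ℝ (Fin N)))
    (hΩopen : IsOpen Ω) (hΩbdd : Bornology.IsBounded Ω)
    (γ : ℝ) (hγ0 : 0 < γ) (hγ1 : γ < 1) (hΩreg : HasC1GammaBoundary N γ Ω)
    (p : ℝ) (hp : 1 < p) :
    pTorsion N p Ω * dirichletEig N p Ω ^ ((1 : ℝ) / (p - 1)) ≤ vol N Ω := by
  have hp0 : 0 < p := lt_trans one_pos hp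
  have hp1 : (0:ℝ) < p - 1 := sub_pos.mpr hp
  have he0 : (0:ℝ) < 1 / (p - 1) := by positivity
  have hvol0 : 0 ≤ vol N Ω := ENNReal.toReal_nonneg
  have hvolt : volume Ω ≠ ⊤ := hΩbdd.measure_lt_top.ne
  haveI hfin : IsFiniteMeasure (volume.restrict Ω) :=
    ⟨by rwa [Measure.restrict_apply_univ, lt_top_iff_ne_top]⟩
  set D : Set ℝ := {r : ℝ | ∃ φ : EuclideanSpace ℝ (Fin N) → ℝ, CcInf N Ω φ ∧
    (0 < ∫ x in Ω, |φ x| ^ p) ∧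
    r = (∫ x in Ω, ‖gradient φ x‖ ^ p) / ∫ x in Ω, |φ x| ^ p} with hD
  set T : Set ℝ := {r : ℝ | ∃ φ : EuclideanSpace ℝ (Fin N) → ℝ, CcInf N Ω φ ∧ (∃ x, φ x ≠ 0) ∧
    r = (∫ x in Ω, |φ x|) ^ p / ∫ x in Ω, ‖gradient φ x‖ ^ p} with hT
  have hDnn : ∀ r ∈ D, 0 ≤ r := by
    rintro r ⟨φ, -, hpos, rfl⟩
    exact div_nonneg (integral_nonneg fun x => Real.rpow_nonneg (norm_nonneg _) _) hpos.le
  have hDbdd : BddBelow D := ⟨0, fun r hr => hDnn r hr⟩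
  have hlam0 : 0 ≤ dirichletEig N p Ω := by
    rcases eq_empty_or_nonempty D with h | h
    · simp [dirichletEig, ← hD, h, Real.sInf_empty]
    · exact le_csInf h fun r hr => hDnn r hr
  rcases eq_or_lt_of_le hlam0 with hlamz | hlampos
  · rw [← hlamz, Real.zero_rpow (by positivity), mul_zero]; exact hvol0
  rcases eq_empty_or_nonempty T with hTe | hTne
  · rw [pTorsion, ← hT, hTe, Real.sSup_empty, Real.zero_rpow (by positivity), zero_mul]
    exact hvol0
  -- main bound: every element of T is at most vol^(p-1) / λ
  set lam := dirichletEig N p Ω with hlamdef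
  have hub : ∀ r ∈ T, r ≤ vol N Ω ^ (p - 1) / lam := by
    rintro r ⟨φ, hφ, ⟨x1, hx1⟩, rfl⟩
    obtain ⟨hφsm, hφcs, hφsupp⟩ := hφ
    have hφc : Continuous φ := hφsm.continuous
    have hgc : Continuous (gradient φ) := aux_cont_gradient hφsm
    have hx1Ω : x1 ∈ Ω := hφsupp (subset_tsupport φ hx1)
    -- positivity of ∫ |φ|^p
    have hC : 0 < ∫ x in Ω, |φ x| ^ p := by
      refine aux_integ_pos hΩopen hΩbdd
        (hφc.abs.rpow_const fun x => Or.inr hp0.le)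
        (fun x => Real.rpow_nonneg (abs_nonneg _) _) hx1Ω ?_
      exact (Real.rpow_pos_of_pos (abs_pos.mpr hx1) p).ne'
    -- a point where the gradient does not vanish
    have hgrad : ∃ x2, x2 ∈ Ω ∧ gradient φ x2 ≠ 0 := by
      by_contra h
      push_neg at h
      have hfd : ∀ x, fderiv ℝ φ x = 0 := by
        intro x
        by_cases hx : x ∈ tsupport φ
        · have hg0 : gradient φ x = 0 := h x (hφsupp hx)
          have := congrArg (InnerProductSpace.toDual ℝ (EuclideanSpace ℝ (Fin N))) hg0
          simpa [gradient] using this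
        · have hev : φ =ᶠ[𝓝 x] 0 := notMem_tsupport_iff_eventuallyEq.mp hx
          rw [hev.fderiv_eq]; exact fderiv_const_apply 0
      have hconst : ∀ y, φ y = φ x1 :=
        fun y => is_const_of_fderiv_eq_zero (hφsm.differentiable (by simp)) hfd y x1
      haveI : Nontrivial (EuclideanSpace ℝ (Fin N)) := by
        refine ⟨0, EuclideanSpace.single ⟨0, by omega⟩ 1, fun hcontr => ?_⟩
        have := congrArg (fun v : EuclideanSpace ℝ (Fin N) => v ⟨0, by omega⟩) hcontr
        simp [EuclideanSpace.single_apply] at this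
      obtain ⟨y, hy⟩ : ∃ y, y ∉ tsupport φ := by
        by_contra hall
        push_neg at hall
        exact (hφcs.ne_univ) (Set.eq_univ_of_forall hall)
      exact hx1 ((hconst y).symm.trans (image_eq_zero_of_notMem_tsupport hy))
    obtain ⟨x2, hx2Ω, hx2⟩ := hgrad
    have hB : 0 < ∫ x in Ω, ‖gradient φ x‖ ^ p := by
      refine aux_integ_pos hΩopen hΩbdd
        (hgc.norm.rpow_const fun x => Or.inr hp0.le)
        (fun x => Real.rpow_nonneg (norm_nonneg _) _) hx2Ω ?_
      exact (Real.rpow_pos_of_pos (norm_pos_iff.mpr hx2) p).ne'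
    have hA : 0 ≤ ∫ x in Ω, |φ x| := integral_nonneg fun x => abs_nonneg _
    -- λ ≤ B / C
    have hmem : ((∫ x in Ω, ‖gradient φ x‖ ^ p) / ∫ x in Ω, |φ x| ^ p) ∈ D :=
      ⟨φ, ⟨hφsm, hφcs, hφsupp⟩, hC, rfl⟩
    have hlamle : lam ≤ (∫ x in Ω, ‖gradient φ x‖ ^ p) / ∫ x in Ω, |φ x| ^ p := by
      rw [hlamdef, dirichletEig]; exact csInf_le hDbdd hmem
    -- Hölder
    have hq : p.HolderConjugate (p / (p - 1)) := Real.HolderConjugate.conjExponent hp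
    have hφmem : MemLp (fun x => |φ x|) (ENNReal.ofReal p) (volume.restrict Ω) := by
      obtain ⟨M, hM⟩ := hφcs.exists_bound_of_continuous hφc
      exact MemLp.of_bound (hφc.abs.aestronglyMeasurable) M
        (Filter.Eventually.of_forall fun x => by
          simpa [Real.norm_eq_abs, abs_abs] using hM x)
    have hol : ∫ x in Ω, |φ x| ≤
        (∫ x in Ω, |φ x| ^ p) ^ (1 / p) * (vol N Ω) ^ (1 / (p / (p - 1))) := by
      have h1 : ∫ x in Ω, |φ x| * (1:ℝ) ≤
          (∫ x in Ω, |φ x| ^ p) ^ (1 / p) *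
          (∫ x in Ω, (1:ℝ) ^ (p / (p - 1))) ^ (1 / (p / (p - 1))) :=
        integral_mul_le_Lp_mul_Lq_of_nonneg hq
          (Filter.Eventually.of_forall fun x => abs_nonneg _)
          (Filter.Eventually.of_forall fun _ => zero_le_one) hφmem (memLp_const 1)
      have h2 : ∫ x in Ω, (1:ℝ) ^ (p / (p - 1)) = vol N Ω := by
        simp [Real.one_rpow, vol, Measure.real]
      simpa [mul_one, h2, vol, Measure.real] using h1
    have hAp : (∫ x in Ω, |φ x|) ^ p ≤ (∫ x in Ω, |φ x| ^ p) * vol N Ω ^ (p - 1) := by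
      have h3 := Real.rpow_le_rpow hA hol hp0.le
      rwa [Real.mul_rpow (Real.rpow_nonneg hC.le _) (Real.rpow_nonneg hvol0 _),
        ← Real.rpow_mul hC.le, ← Real.rpow_mul hvol0,
        one_div_mul_cancel hp0.ne', Real.rpow_one, one_div, inv_mul_eq_div,
        hq.div_conj_eq_sub_one] at h3
    -- conclude
    have hCB : (∫ x in Ω, |φ x| ^ p) / (∫ x in Ω, ‖gradient φ x‖ ^ p) ≤ 1 / lam := by
      rw [div_le_div_iff₀ hB hlampos]
      calc (∫ x in Ω, |φ x| ^ p) * lam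
          ≤ (∫ x in Ω, |φ x| ^ p) *
            ((∫ x in Ω, ‖gradient φ x‖ ^ p) / ∫ x in Ω, |φ x| ^ p) :=
            mul_le_mul_of_nonneg_left hlamle hC.le
        _ = 1 * (∫ x in Ω, ‖gradient φ x‖ ^ p) := by
            field_simp
    calc (∫ x in Ω, |φ x|) ^ p / ∫ x in Ω, ‖gradient φ x‖ ^ p
        ≤ ((∫ x in Ω, |φ x| ^ p) * vol N Ω ^ (p - 1)) / ∫ x in Ω, ‖gradient φ x‖ ^ p :=
          (div_le_div_iff_of_pos_right hB).mpr hAp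
      _ = vol N Ω ^ (p - 1) *
          ((∫ x in Ω, |φ x| ^ p) / ∫ x in Ω, ‖gradient φ x‖ ^ p) := by ring
      _ ≤ vol N Ω ^ (p - 1) * (1 / lam) :=
          mul_le_mul_of_nonneg_left hCB (Real.rpow_nonneg hvol0 _)
      _ = vol N Ω ^ (p - 1) / lam := by rw [mul_one_div]
  have hTbdd : BddAbove T := ⟨_, fun r hr => hub r hr⟩
  have hS : sSup T ≤ vol N Ω ^ (p - 1) / lam := csSup_le hTne hub
  have hS0 : 0 ≤ sSup T := by
    obtain ⟨r, hr⟩ := hTne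
    refine le_trans ?_ (le_csSup hTbdd hr)
    obtain ⟨φ, -, -, rfl⟩ := hr
    exact div_nonneg (Real.rpow_nonneg (integral_nonneg fun x => abs_nonneg _) _)
      (integral_nonneg fun x => Real.rpow_nonneg (norm_nonneg _) _)
  have hstep : pTorsion N p Ω ≤ (vol N Ω ^ (p - 1) / lam) ^ ((1:ℝ) / (p - 1)) := by
    rw [pTorsion, ← hT]
    exact Real.rpow_le_rpow hS0 hS he0.le
  calc pTorsion N p Ω * lam ^ ((1:ℝ) / (p - 1))
      ≤ (vol N Ω ^ (p - 1) / lam) ^ ((1:ℝ) / (p - 1)) * lam ^ ((1:ℝ) / (p - 1)) :=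
        mul_le_mul_of_nonneg_right hstep (Real.rpow_nonneg hlampos.le _)
    _ = ((vol N Ω ^ (p - 1) / lam) * lam) ^ ((1:ℝ) / (p - 1)) :=
        (Real.mul_rpow (div_nonneg (Real.rpow_nonneg hvol0 _) hlampos.le) hlampos.le).symm
    _ = (vol N Ω ^ (p - 1)) ^ ((1:ℝ) / (p - 1)) := by
        rw [div_mul_cancel₀ _ hlampos.ne']
    _ = vol N Ω := by
        rw [← Real.rpow_mul hvol0, mul_one_div, div_self hp1.ne', Real.rpow_one]
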